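/- Let r be a twice differentiable real-valued function on an open interval I with r(t) > 0 for all t ∈ I, satisfying 4·r(t)·r''(t) − 4·r'(t)² − (1 − r(t)⁴) = 0 on I. Then the function w := r'/r is twice differentiable on I and satisfies w''(t) + (1/2)·(1/r(t)² + r(t)²)·w(t) = 0 for all t ∈ I. -/

import Mathlib

open Set

/-- The Jacobi field `r'/r` generated by vertical translations solves the
zeroth-mode Jacobi equation `w'' + (1/2)(1/r² + r²) w = 0` along any positive
solution of the catenoid profile equation. -/
theorem jacobi_field_vertical_translation
    (a b : ℝ) (r r' r'' : ℝ → ℝ)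
    (hderiv : ∀ t ∈ Set.Ioo a b, HasDerivAt r (r' t) t)
    (hderiv' : ∀ t ∈ Set.Ioo a b, HasDerivAt r' (r'' t) t)
    (hr : ∀ t ∈ Set.Ioo a b, 0 < r t)
    (hode : ∀ t ∈ Set.Ioo a b,
      4 * r t * r'' t - 4 * (r' t) ^ 2 - (1 - (r t) ^ 4) = 0) :
    ∃ w' w'' : ℝ → ℝ,
      (∀ t ∈ Set.Ioo a b, HasDerivAt (fun s => r' s / r s) (w' t) t) ∧
      (∀ t ∈ Set.Ioo a b, HasDerivAt w' (w'' t) t) ∧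
      (∀ t ∈ Set.Ioo a b,
        w'' t + (1 / 2) * (1 / (r t) ^ 2 + (r t) ^ 2) * (r' t / r t) = 0) := by
  refine ⟨fun t => (1 - r t ^ 4) / (4 * r t ^ 2),
    fun t => -(1 / 2) * (1 / r t ^ 2 + r t ^ 2) * (r' t / r t), ?_, ?_, ?_⟩
  · intro t ht
    have hne : r t ≠ 0 := (hr t ht).ne'
    have h := (hderiv' t ht).div (hderiv t ht) hne
    refine h.congr_deriv ?_
    have := hode t ht
    field_simp
    nlinarith [this]
  · intro t ht
    have hne : r t ≠ 0 := (hr t ht).ne'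
    have hnum : HasDerivAt (fun s => 1 - r s ^ 4) (-(4 * r t ^ 3 * r' t)) t := by
      simpa using ((hderiv t ht).pow 4).const_sub 1
    have hden : HasDerivAt (fun s => 4 * r s ^ 2) (4 * (2 * r t * r' t)) t := by
      simpa using ((hderiv t ht).pow 2).const_mul 4
    have h := hnum.div hden (by positivity)
    refine h.congr_deriv ?_
    field_simp
    ring
  · intro t ht
    ring
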